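/- ∑_{n=0}^∞ (21n + 13) · (n!)⁶ / (8 · ((2n+1)!)³) = π²/6. -/

import Mathlib

open scoped BigOperators
open Filter Topology

noncomputable def zbF (n j : ℕ) : ℝ :=
  (2 * (n : ℝ) + 1) * (Nat.factorial n : ℝ) ^ 4 * (Nat.factorial (n + j) : ℝ) ^ 2 /
    ((Nat.factorial (2 * n + 1) : ℝ) * (Nat.factorial (2 * n + j + 1) : ℝ) ^ 2)

noncomputable def zbC (n j : ℕ) : ℝ :=
  (2 * (j : ℝ) ^ 3 + (13 * (n : ℝ) + 11) * (j : ℝ) ^ 2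
      + (28 * (n : ℝ) ^ 2 + 48 * (n : ℝ) + 20) * (j : ℝ)
      + (21 * (n : ℝ) + 13) * ((n : ℝ) + 1) ^ 2) * (Nat.factorial n : ℝ) ^ 4
    * (Nat.factorial (n + j) : ℝ) ^ 2 /
    (2 * (Nat.factorial (2 * n + 1) : ℝ) * (Nat.factorial (2 * n + j + 2) : ℝ) ^ 2)

lemma zb_fact_pos (m : ℕ) : (0 : ℝ) < (Nat.factorial m : ℝ) := by
  exact_mod_cast Nat.factorial_pos m

lemma zb_pair (n j : ℕ) : zbF n j - zbF (n + 1) j = zbC n j - zbC n (j + 1) := by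
  have hA := zb_fact_pos n
  have hB := zb_fact_pos (n + j)
  have hC := zb_fact_pos (2 * n + 1)
  have hD := zb_fact_pos (2 * n + j + 1)
  have eA : (Nat.factorial (n + 1) : ℝ) = ((n : ℝ) + 1) * (Nat.factorial n : ℝ) := by
    rw [Nat.factorial_succ]; push_cast; ring
  have eB : (Nat.factorial (n + 1 + j) : ℝ)
      = ((n : ℝ) + (j : ℝ) + 1) * (Nat.factorial (n + j) : ℝ) := by
    have h : n + 1 + j = (n + j) + 1 := by omega
    rw [h, Nat.factorial_succ]; push_cast; ring
  have eC : (Nat.factorial (2 * (n + 1) + 1) : ℝ)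
      = (2 * (n : ℝ) + 3) * (2 * (n : ℝ) + 2) * (Nat.factorial (2 * n + 1) : ℝ) := by
    have h : 2 * (n + 1) + 1 = (2 * n + 1) + 1 + 1 := by omega
    rw [h, Nat.factorial_succ, Nat.factorial_succ]; push_cast; ring
  have eD : (Nat.factorial (2 * (n + 1) + j + 1) : ℝ)
      = (2 * (n : ℝ) + (j : ℝ) + 3) * (2 * (n : ℝ) + (j : ℝ) + 2)
        * (Nat.factorial (2 * n + j + 1) : ℝ) := by
    have h : 2 * (n + 1) + j + 1 = (2 * n + j + 1) + 1 + 1 := by omega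
    rw [h, Nat.factorial_succ, Nat.factorial_succ]; push_cast; ring
  have eE : (Nat.factorial (2 * n + j + 2) : ℝ)
      = (2 * (n : ℝ) + (j : ℝ) + 2) * (Nat.factorial (2 * n + j + 1) : ℝ) := by
    have h : 2 * n + j + 2 = (2 * n + j + 1) + 1 := by omega
    rw [h, Nat.factorial_succ]; push_cast; ring
  have eB2 : (Nat.factorial (n + (j + 1)) : ℝ)
      = ((n : ℝ) + (j : ℝ) + 1) * (Nat.factorial (n + j) : ℝ) := by
    have h : n + (j + 1) = (n + j) + 1 := by omega
    rw [h, Nat.factorial_succ]; push_cast; ring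
  have eE2 : (Nat.factorial (2 * n + (j + 1) + 2) : ℝ)
      = (2 * (n : ℝ) + (j : ℝ) + 3) * (2 * (n : ℝ) + (j : ℝ) + 2)
        * (Nat.factorial (2 * n + j + 1) : ℝ) := by
    have h : 2 * n + (j + 1) + 2 = (2 * n + j + 1) + 1 + 1 := by omega
    rw [h, Nat.factorial_succ, Nat.factorial_succ]; push_cast; ring
  unfold zbF zbC
  rw [eA, eB, eC, eD, eE, eB2, eE2]
  have h1 : (Nat.factorial n : ℝ) ≠ 0 := ne_of_gt hA
  have h2 : (Nat.factorial (n + j) : ℝ) ≠ 0 := ne_of_gt hB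
  have h3 : (Nat.factorial (2 * n + 1) : ℝ) ≠ 0 := ne_of_gt hC
  have h4 : (Nat.factorial (2 * n + j + 1) : ℝ) ≠ 0 := ne_of_gt hD
  have h5 : (2 * (n : ℝ) + 3) ≠ 0 := by positivity
  have h6 : (2 * (n : ℝ) + 2) ≠ 0 := by positivity
  have h7 : (2 * (n : ℝ) + (j : ℝ) + 3) ≠ 0 := by positivity
  have h8 : (2 * (n : ℝ) + (j : ℝ) + 2) ≠ 0 := by positivity
  push_cast
  field_simp
  ring

noncomputable def zbβ (n : ℕ) : ℝ :=
  (2 * (n : ℝ) + 1) * (Nat.factorial n : ℝ) ^ 4 /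
    ((Nat.factorial (2 * n + 1) : ℝ) * ((n : ℝ) + 1) ^ (2 * n))

noncomputable def zbM (n : ℕ) : ℝ :=
  (2 + (13 * (n : ℝ) + 11) + (28 * (n : ℝ) ^ 2 + 48 * (n : ℝ) + 20)
      + (21 * (n : ℝ) + 13) * ((n : ℝ) + 1) ^ 2) * (Nat.factorial n : ℝ) ^ 4 /
    (2 * (Nat.factorial (2 * n + 1) : ℝ))

lemma zbC_zero (n : ℕ) : zbC n 0 =
    (21 * (n : ℝ) + 13) * (Nat.factorial n : ℝ) ^ 6 /
      (8 * (Nat.factorial (2 * n + 1) : ℝ) ^ 3) := by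
  have hC := zb_fact_pos (2 * n + 1)
  have e1 : (Nat.factorial (n + 0) : ℝ) = (Nat.factorial n : ℝ) := by norm_num
  have e2 : (Nat.factorial (2 * n + 0 + 2) : ℝ)
      = (2 * (n : ℝ) + 2) * (Nat.factorial (2 * n + 1) : ℝ) := by
    have h : 2 * n + 0 + 2 = (2 * n + 1) + 1 := by omega
    rw [h, Nat.factorial_succ]; push_cast; ring
  unfold zbC
  rw [e1, e2]
  have h3 : (Nat.factorial (2 * n + 1) : ℝ) ≠ 0 := ne_of_gt hC
  have h6 : (2 * (n : ℝ) + 2) ≠ 0 := by positivity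
  push_cast
  field_simp
  ring

lemma zbF_zero (j : ℕ) : zbF 0 j = 1 / ((j : ℝ) + 1) ^ 2 := by
  have hB := zb_fact_pos j
  unfold zbF
  have e1 : (0 : ℕ) + j = j := by omega
  have e3 : 2 * 0 + 1 = 1 := by omega
  rw [e1, e3, Nat.factorial_one, Nat.factorial_succ, Nat.factorial_zero]
  have h2 : (Nat.factorial j : ℝ) ≠ 0 := ne_of_gt hB
  have h7 : ((j : ℝ) + 1) ≠ 0 := by positivity
  field_simp
  push_cast
  ring

lemma zb_basel : HasSum (fun j : ℕ => 1 / ((j : ℝ) + 1) ^ 2) (Real.pi ^ 2 / 6) := by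
  have h := hasSum_zeta_two
  have h2 := (hasSum_nat_add_iff' (f := fun n : ℕ => (1 : ℝ) / (n : ℝ) ^ 2) 1).mpr h
  simp only [Finset.range_one, Finset.sum_singleton, Nat.cast_zero] at h2
  norm_num at h2
  convert h2 using 2 with j
  · rfl
  push_cast
  ring

lemma zb_fact_mul_pow_le (a b : ℕ) :
    Nat.factorial a * (a + 1) ^ b ≤ Nat.factorial (a + b) := by
  induction b with
  | zero => simp
  | succ b ih =>
    have h : a + (b + 1) = (a + b) + 1 := rfl
    rw [h, Nat.factorial_succ]
    calc Nat.factorial a * (a + 1) ^ (b + 1)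
        = Nat.factorial a * (a + 1) ^ b * (a + 1) := by ring
      _ ≤ Nat.factorial (a + b) * (a + b + 1) := Nat.mul_le_mul ih (by omega)
      _ = (a + b + 1) * Nat.factorial (a + b) := by ring

lemma zbL2 (n j : ℕ) :
    Nat.factorial (n + j) * ((n + 1) ^ n * (j + 1)) ≤ Nat.factorial (2 * n + j + 1) := by
  have h1 : (n + 1) ^ n * (j + 1) ≤ (n + j + 1) ^ (n + 1) := by
    calc (n + 1) ^ n * (j + 1) ≤ (n + j + 1) ^ n * (n + j + 1) :=
          Nat.mul_le_mul (Nat.pow_le_pow_left (by omega) n) (by omega)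
      _ = (n + j + 1) ^ (n + 1) := by rw [pow_succ]
  calc Nat.factorial (n + j) * ((n + 1) ^ n * (j + 1))
      ≤ Nat.factorial (n + j) * ((n + j) + 1) ^ (n + 1) :=
        Nat.mul_le_mul_left _ h1
    _ ≤ Nat.factorial ((n + j) + (n + 1)) := zb_fact_mul_pow_le (n + j) (n + 1)
    _ = Nat.factorial (2 * n + j + 1) := by congr 1; omega

lemma zbL3 (n j : ℕ) :
    Nat.factorial (n + j) * (j + 1) ^ 2 ≤ Nat.factorial (2 * n + j + 2) := by
  have h1 : (j + 1) ^ 2 ≤ ((n + j) + 1) ^ (n + 2) := by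
    calc (j + 1) ^ 2 ≤ (n + j + 1) ^ 2 := Nat.pow_le_pow_left (by omega) 2
      _ ≤ (n + j + 1) ^ (n + 2) := Nat.pow_le_pow_right (by omega) (by omega)
  calc Nat.factorial (n + j) * (j + 1) ^ 2
      ≤ Nat.factorial (n + j) * ((n + j) + 1) ^ (n + 2) := Nat.mul_le_mul_left _ h1
    _ ≤ Nat.factorial ((n + j) + (n + 2)) := zb_fact_mul_pow_le (n + j) (n + 2)
    _ = Nat.factorial (2 * n + j + 2) := by congr 1; omega

lemma zbF_nonneg (n j : ℕ) : 0 ≤ zbF n j := by unfold zbF; positivity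

lemma zbC_nonneg (n j : ℕ) : 0 ≤ zbC n j := by unfold zbC; positivity

lemma zbF_le (n j : ℕ) : zbF n j ≤ zbβ n * (1 / ((j : ℝ) + 1) ^ 2) := by
  have hB := zb_fact_pos (n + j)
  have hC := zb_fact_pos (2 * n + 1)
  have hD := zb_fact_pos (2 * n + j + 1)
  have hkey : (Nat.factorial (n + j) : ℝ) * (((n : ℝ) + 1) ^ n * ((j : ℝ) + 1))
      ≤ (Nat.factorial (2 * n + j + 1) : ℝ) := by exact_mod_cast zbL2 n j
  have h1 : zbF n j ≤ (2 * (n : ℝ) + 1) * (Nat.factorial n : ℝ) ^ 4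
      * (Nat.factorial (n + j) : ℝ) ^ 2 /
      ((Nat.factorial (2 * n + 1) : ℝ)
        * ((Nat.factorial (n + j) : ℝ) * (((n : ℝ) + 1) ^ n * ((j : ℝ) + 1))) ^ 2) := by
    unfold zbF
    gcongr
  refine h1.trans (le_of_eq ?_)
  unfold zbβ
  have h2 : (Nat.factorial (n + j) : ℝ) ≠ 0 := ne_of_gt hB
  have h3 : (Nat.factorial (2 * n + 1) : ℝ) ≠ 0 := ne_of_gt hC
  have h7 : ((j : ℝ) + 1) ≠ 0 := by positivity
  have h8 : ((n : ℝ) + 1) ≠ 0 := by positivity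
  field_simp
  ring

lemma zbC_le (n j : ℕ) : zbC n j ≤ zbM n * (1 / ((j : ℝ) + 1)) := by
  have hB := zb_fact_pos (n + j)
  have hC := zb_fact_pos (2 * n + 1)
  have hE := zb_fact_pos (2 * n + j + 2)
  have hy : (0 : ℝ) ≤ (j : ℝ) := Nat.cast_nonneg j
  have hx : (0 : ℝ) ≤ (n : ℝ) := Nat.cast_nonneg n
  have c2 : ((j : ℝ)) ^ 2 ≤ ((j : ℝ) + 1) ^ 3 := by nlinarith [sq_nonneg (j : ℝ)]
  have c3 : ((j : ℝ)) ≤ ((j : ℝ) + 1) ^ 3 := by nlinarith [sq_nonneg (j : ℝ)]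
  have c4 : (1 : ℝ) ≤ ((j : ℝ) + 1) ^ 3 := by nlinarith [sq_nonneg (j : ℝ)]
  have hY : (2 * (j : ℝ) ^ 3 + (13 * (n : ℝ) + 11) * (j : ℝ) ^ 2
      + (28 * (n : ℝ) ^ 2 + 48 * (n : ℝ) + 20) * (j : ℝ)
      + (21 * (n : ℝ) + 13) * ((n : ℝ) + 1) ^ 2)
      ≤ (2 + (13 * (n : ℝ) + 11) + (28 * (n : ℝ) ^ 2 + 48 * (n : ℝ) + 20)
      + (21 * (n : ℝ) + 13) * ((n : ℝ) + 1) ^ 2) * ((j : ℝ) + 1) ^ 3 := by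
    have a2 : (0:ℝ) ≤ 13 * (n : ℝ) + 11 := by positivity
    have a1 : (0:ℝ) ≤ 28 * (n : ℝ) ^ 2 + 48 * (n : ℝ) + 20 := by positivity
    have a0 : (0:ℝ) ≤ (21 * (n : ℝ) + 13) * ((n : ℝ) + 1) ^ 2 := by positivity
    nlinarith [mul_le_mul_of_nonneg_left c2 a2, mul_le_mul_of_nonneg_left c3 a1,
      mul_le_mul_of_nonneg_left c4 a0]
  have hkey : (Nat.factorial (n + j) : ℝ) * ((j : ℝ) + 1) ^ 2
      ≤ (Nat.factorial (2 * n + j + 2) : ℝ) := by exact_mod_cast zbL3 n j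
  have h1 : zbC n j ≤ (2 + (13 * (n : ℝ) + 11) + (28 * (n : ℝ) ^ 2 + 48 * (n : ℝ) + 20)
      + (21 * (n : ℝ) + 13) * ((n : ℝ) + 1) ^ 2) * ((j : ℝ) + 1) ^ 3
      * (Nat.factorial n : ℝ) ^ 4 * (Nat.factorial (n + j) : ℝ) ^ 2 /
      (2 * (Nat.factorial (2 * n + 1) : ℝ)
        * ((Nat.factorial (n + j) : ℝ) * ((j : ℝ) + 1) ^ 2) ^ 2) := by
    unfold zbC
    gcongr
  refine h1.trans (le_of_eq ?_)
  unfold zbM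
  have h2 : (Nat.factorial (n + j) : ℝ) ≠ 0 := ne_of_gt hB
  have h3 : (Nat.factorial (2 * n + 1) : ℝ) ≠ 0 := ne_of_gt hC
  have h7 : ((j : ℝ) + 1) ≠ 0 := by positivity
  field_simp

lemma zbF_summable (n : ℕ) : Summable (zbF n) :=
  Summable.of_nonneg_of_le (zbF_nonneg n) (zbF_le n) ((zb_basel.summable).mul_left (zbβ n))

noncomputable def zbH (n : ℕ) : ℝ := ∑' j, zbF n j

lemma zbH_zero : zbH 0 = Real.pi ^ 2 / 6 := by
  unfold zbH
  have h : (fun j : ℕ => zbF 0 j) = fun j : ℕ => 1 / ((j : ℝ) + 1) ^ 2 := funext zbF_zero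
  rw [h]
  exact zb_basel.tsum_eq

lemma zbC_tendsto (n : ℕ) : Tendsto (fun j => zbC n j) atTop (𝓝 0) := by
  apply squeeze_zero (zbC_nonneg n) (zbC_le n)
  have h : Tendsto (fun j : ℕ => 1 / ((j : ℝ) + 1)) atTop (𝓝 0) :=
    tendsto_one_div_add_atTop_nhds_zero_nat
  have h2 := h.const_mul (zbM n)
  simpa using h2

lemma zbH_step (n : ℕ) : zbH n - zbH (n + 1) = zbC n 0 := by
  have hs1 := zbF_summable n
  have hs2 := zbF_summable (n + 1)
  have hdiff : Summable (fun j => zbF n j - zbF (n + 1) j) := hs1.sub hs2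
  have h1 : zbH n - zbH (n + 1) = ∑' j, (zbF n j - zbF (n + 1) j) := (Summable.tsum_sub hs1 hs2).symm
  have h2 : Tendsto (fun N => ∑ j ∈ Finset.range N, (zbF n j - zbF (n + 1) j)) atTop
      (𝓝 (∑' j, (zbF n j - zbF (n + 1) j))) := hdiff.hasSum.tendsto_sum_nat
  have h3 : (fun N => ∑ j ∈ Finset.range N, (zbF n j - zbF (n + 1) j))
      = fun N => zbC n 0 - zbC n N := by
    funext N
    calc ∑ j ∈ Finset.range N, (zbF n j - zbF (n + 1) j)
        = ∑ j ∈ Finset.range N, (zbC n j - zbC n (j + 1)) :=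
          Finset.sum_congr rfl (fun j _ => zb_pair n j)
      _ = zbC n 0 - zbC n N := Finset.sum_range_sub' (zbC n) N
  rw [h3] at h2
  have h4 : Tendsto (fun N => zbC n 0 - zbC n N) atTop (𝓝 (zbC n 0 - 0)) :=
    tendsto_const_nhds.sub (zbC_tendsto n)
  have h5 := tendsto_nhds_unique h2 h4
  rw [h1, h5]
  ring

lemma zbH_nonneg (n : ℕ) : 0 ≤ zbH n := tsum_nonneg (zbF_nonneg n)

lemma zbH_le (n : ℕ) : zbH n ≤ zbβ n * (Real.pi ^ 2 / 6) := by
  have h1 : zbH n ≤ ∑' j : ℕ, zbβ n * (1 / ((j : ℝ) + 1) ^ 2) :=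
    Summable.tsum_le_tsum (zbF_le n) (zbF_summable n) ((zb_basel.summable).mul_left (zbβ n))
  rwa [tsum_mul_left, zb_basel.tsum_eq] at h1

lemma zbβ_zero : zbβ 0 = 1 := by
  unfold zbβ
  norm_num

lemma zbβ_step (n : ℕ) : zbβ (n + 1) ≤ (1 / 2) * zbβ n := by
  have hA := zb_fact_pos n
  have hC := zb_fact_pos (2 * n + 1)
  have eA : (Nat.factorial (n + 1) : ℝ) = ((n : ℝ) + 1) * (Nat.factorial n : ℝ) := by
    rw [Nat.factorial_succ]; push_cast; ring
  have eC : (Nat.factorial (2 * (n + 1) + 1) : ℝ)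
      = (2 * (n : ℝ) + 3) * (2 * (n : ℝ) + 2) * (Nat.factorial (2 * n + 1) : ℝ) := by
    have h : 2 * (n + 1) + 1 = (2 * n + 1) + 1 + 1 := by omega
    rw [h, Nat.factorial_succ, Nat.factorial_succ]; push_cast; ring
  have eexp : 2 * (n + 1) = (2 * n) + 2 := by ring
  have hx : (0 : ℝ) ≤ (n : ℝ) := Nat.cast_nonneg n
  have hA' : (Nat.factorial n : ℝ) ≠ 0 := ne_of_gt hA
  have hC' : (Nat.factorial (2 * n + 1) : ℝ) ≠ 0 := ne_of_gt hC
  unfold zbβ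
  rw [eA, eC, eexp]
  push_cast
  have hpow : ((n : ℝ) + 1) ^ (2 * n + 2) ≤ ((n : ℝ) + 1 + 1) ^ (2 * n + 2) :=
    pow_le_pow_left₀ (by positivity) (by linarith) _
  calc (2 * ((n : ℝ) + 1) + 1) * (((n : ℝ) + 1) * (Nat.factorial n : ℝ)) ^ 4 /
        ((2 * (n : ℝ) + 3) * (2 * (n : ℝ) + 2) * (Nat.factorial (2 * n + 1) : ℝ)
          * ((n : ℝ) + 1 + 1) ^ (2 * n + 2))
      ≤ (2 * ((n : ℝ) + 1) + 1) * (((n : ℝ) + 1) * (Nat.factorial n : ℝ)) ^ 4 /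
        ((2 * (n : ℝ) + 3) * (2 * (n : ℝ) + 2) * (Nat.factorial (2 * n + 1) : ℝ)
          * ((n : ℝ) + 1) ^ (2 * n + 2)) := by gcongr
    _ = 1 / 2 * (((n : ℝ) + 1) * (Nat.factorial n : ℝ) ^ 4 /
        ((Nat.factorial (2 * n + 1) : ℝ) * ((n : ℝ) + 1) ^ (2 * n))) := by
        rw [pow_add]
        have h8 : ((n : ℝ) + 1) ≠ 0 := by positivity
        have h5 : (2 * (n : ℝ) + 3) ≠ 0 := by positivity
        have h6 : (2 * (n : ℝ) + 2) ≠ 0 := by positivity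
        field_simp
        ring
    _ ≤ 1 / 2 * ((2 * (n : ℝ) + 1) * (Nat.factorial n : ℝ) ^ 4 /
        ((Nat.factorial (2 * n + 1) : ℝ) * ((n : ℝ) + 1) ^ (2 * n))) := by
        gcongr
        linarith

lemma zbβ_le (n : ℕ) : zbβ n ≤ (1 / 2 : ℝ) ^ n := by
  induction n with
  | zero => rw [zbβ_zero]; norm_num
  | succ n ih =>
    calc zbβ (n + 1) ≤ (1 / 2) * zbβ n := zbβ_step n
      _ ≤ (1 / 2) * (1 / 2 : ℝ) ^ n := by linarith
      _ = (1 / 2 : ℝ) ^ (n + 1) := by rw [pow_succ]; ring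

lemma zbH_tendsto : Filter.Tendsto zbH atTop (𝓝 0) := by
  apply squeeze_zero (g := fun n => (1 / 2 : ℝ) ^ n * (Real.pi ^ 2 / 6)) zbH_nonneg
  · intro n
    exact (zbH_le n).trans (mul_le_mul_of_nonneg_right (zbβ_le n) (by positivity))
  · have h := tendsto_pow_atTop_nhds_zero_of_lt_one
      (by norm_num : (0:ℝ) ≤ 1 / 2) (by norm_num : (1/2:ℝ) < 1)
    simpa using h.mul_const (Real.pi ^ 2 / 6)

theorem zeilberger_pi_squared :
    ∑' n : ℕ, (21 * (n : ℝ) + 13) * (Nat.factorial n : ℝ) ^ 6 /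
        (8 * (Nat.factorial (2 * n + 1) : ℝ) ^ 3) =
      Real.pi ^ 2 / 6 := by
  set t : ℕ → ℝ := fun n => (21 * (n : ℝ) + 13) * (Nat.factorial n : ℝ) ^ 6 /
      (8 * (Nat.factorial (2 * n + 1) : ℝ) ^ 3) with ht
  have hterm : ∀ n, t n = zbH n - zbH (n + 1) := by
    intro n
    rw [ht]
    simp only
    rw [← zbC_zero n, zbH_step n]
  have hps : ∀ N, ∑ n ∈ Finset.range N, t n = zbH 0 - zbH N := by
    intro N
    calc ∑ n ∈ Finset.range N, t n = ∑ n ∈ Finset.range N, (zbH n - zbH (n + 1)) :=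
          Finset.sum_congr rfl (fun n _ => hterm n)
      _ = zbH 0 - zbH N := Finset.sum_range_sub' zbH N
  have hlim : Filter.Tendsto (fun N => ∑ n ∈ Finset.range N, t n) atTop
      (𝓝 (Real.pi ^ 2 / 6)) := by
    have h : (fun N => ∑ n ∈ Finset.range N, t n) = fun N => zbH 0 - zbH N := funext hps
    rw [h, zbH_zero]
    have h2 : Filter.Tendsto (fun N => Real.pi ^ 2 / 6 - zbH N) atTop
        (𝓝 (Real.pi ^ 2 / 6 - 0)) := tendsto_const_nhds.sub zbH_tendsto
    simpa using h2
  have hnn : ∀ n, 0 ≤ t n := by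
    intro n
    rw [ht]
    simp only
    positivity
  have hsum : Summable t := by
    apply summable_of_sum_range_le hnn
    intro N
    rw [hps N]
    have := zbH_nonneg N
    linarith
  exact tendsto_nhds_unique hsum.hasSum.tendsto_sum_nat hlim
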